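/- Let G be a group with a normal subgroup N such that G/(Z(G)·N) is cyclic, generated by the coset of x ∈ G. Then [N, G] = [N, N] · {[x, n] : n ∈ N}, i.e., the commutator subgroup [N,G] is generated by [N,N] together with the commutators [x,n] for n ∈ N. -/

import Mathlib

open Pointwise
open scoped commutatorElement

/-- The group-theoretic observation in Prop. 4.10(i) of Hazrat–Wadsworth: if
`N ⊴ G` and `G/(Z(G)·N)` is cyclic generated by the coset of `x`, then
`[N,G] = [N,N]·[x,N]`. -/
theorem stmt10 {G : Type*} [Group G] (N : Subgroup G) [N.Normal] (x : G)
    (hcyc : ∀ g : G, ∃ (k : ℤ) (z n : G),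
      z ∈ Subgroup.center G ∧ n ∈ N ∧ g = x ^ k * z * n) :
    ((⁅N, (⊤ : Subgroup G)⁆ : Subgroup G) : Set G) =
      ((⁅N, N⁆ : Subgroup G) : Set G) * {y : G | ∃ n ∈ N, y = ⁅x, n⁆} := by
  set H : Subgroup G := ⁅N, N⁆ with hHdef
  haveI hHnormal : H.Normal := Subgroup.commutator_normal N N
  let π : G →* G ⧸ H := QuotientGroup.mk' H
  have hker : ∀ h ∈ H, π h = 1 := fun h hh => (QuotientGroup.eq_one_iff h).mpr hh
  have hxnN : ∀ n ∈ N, ∀ a : G, ⁅a, n⁆ ∈ N := by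
    intro n hn a
    have : ⁅a, n⁆ = a * n * a⁻¹ * n⁻¹ := commutatorElement_def a n
    rw [this]
    exact N.mul_mem (‹N.Normal›.conj_mem n hn a) (N.inv_mem hn)
  -- multiplication rule mod H
  have hmul : ∀ n₁ ∈ N, ∀ n₂ ∈ N, π ⁅x, n₁⁆ * π ⁅x, n₂⁆ = π ⁅x, n₁ * n₂⁆ := by
    intro n₁ h₁ n₂ h₂
    have hc : ⁅n₁, ⁅x, n₂⁆⁆ ∈ H :=
      Subgroup.commutator_mem_commutator h₁ (hxnN n₂ h₂ x)
    have hid : ⁅x, n₁ * n₂⁆ = ⁅x, n₁⁆ * (⁅n₁, ⁅x, n₂⁆⁆ * ⁅x, n₂⁆) := by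
      simp only [commutatorElement_def]; group
    rw [hid, map_mul, map_mul, hker _ hc, one_mul]
  have hone : π ⁅x, (1:G)⁆ = 1 := by simp
  have hinv : ∀ m ∈ N, (π ⁅x, m⁆)⁻¹ = π ⁅x, m⁻¹⁆ := by
    intro m hm
    refine inv_eq_of_mul_eq_one_right ?_
    rw [hmul m hm m⁻¹ (N.inv_mem hm), mul_inv_cancel, hone]
  -- conjugation by x^{±1} permutes the generators exactly
  have hcx : ∀ n : G, x * ⁅x, n⁆ * x⁻¹ = ⁅x, x * n * x⁻¹⁆ := by
    intro n; simp only [commutatorElement_def]; group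
  have hcxinv : ∀ n : G, x⁻¹ * ⁅x, n⁆ * x = ⁅x, x⁻¹ * n * x⁆ := by
    intro n; simp only [commutatorElement_def]; group
  -- key: commutators with powers of x
  have key : ∀ k : ℤ, ∀ n ∈ N, ∃ m ∈ N, π ⁅x ^ k, n⁆ = π ⁅x, m⁆ := by
    intro k
    induction k using Int.induction_on with
    | zero => intro n hn; exact ⟨1, N.one_mem, by simp⟩
    | succ k ih =>
      intro n hn
      obtain ⟨m, hm, hpm⟩ := ih n hn
      have hid : ⁅x ^ ((k : ℤ) + 1), n⁆ = x * ⁅x ^ (k : ℤ), n⁆ * x⁻¹ * ⁅x, n⁆ := by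
        simp only [commutatorElement_def]; group
      refine ⟨(x * m * x⁻¹) * n, N.mul_mem (‹N.Normal›.conj_mem m hm x) hn, ?_⟩
      rw [hid, map_mul, map_mul, map_mul, hpm, ← map_mul, ← map_mul, mul_assoc,
        ← mul_assoc x ⁅x, m⁆ x⁻¹, hcx m]
      exact hmul _ (‹N.Normal›.conj_mem m hm x) n hn
    | pred k ih =>
      intro n hn
      obtain ⟨m, hm, hpm⟩ := ih n hn
      have hid : ⁅x ^ (-(k : ℤ) - 1), n⁆ =
          x⁻¹ * ⁅x ^ (-(k : ℤ)), n⁆ * x * ⁅x, x⁻¹ * n * x⁆⁻¹ := by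
        simp only [commutatorElement_def]; group
      have hmem1 : x⁻¹ * m * x ∈ N := ‹N.Normal›.conj_mem' m hm x
      have hmem2 : (x⁻¹ * n * x)⁻¹ ∈ N := N.inv_mem (‹N.Normal›.conj_mem' n hn x)
      refine ⟨(x⁻¹ * m * x) * (x⁻¹ * n * x)⁻¹, N.mul_mem hmem1 hmem2, ?_⟩
      rw [hid, map_mul, map_mul, map_mul, hpm, ← map_mul, ← map_mul, mul_assoc,
        ← mul_assoc x⁻¹ ⁅x, m⁆ x, hcxinv m, map_inv,
        hinv _ (‹N.Normal›.conj_mem' n hn x)]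
      exact hmul _ hmem1 _ hmem2
  -- every generator ⁅n, g⁆ of ⁅N,⊤⁆ is a π⁅x,m⁆ mod H
  have hgen : ∀ n ∈ N, ∀ g : G, ∃ m ∈ N, π ⁅n, g⁆ = π ⁅x, m⁆ := by
    intro n hn g
    obtain ⟨k, z, n', hz, hn', hg⟩ := hcyc g
    have hzc := Subgroup.mem_center_iff.mp hz
    have hg' : g = z * (x ^ k * n') := by rw [hg, hzc (x ^ k), mul_assoc]
    have hz2 : ∀ c : G, z * c * z⁻¹ = c := by
      intro c; rw [← hzc c]; group
    -- ⁅g, n⁆ = x^k ⁅n', n⁆ x^{-k} * ⁅x^k, n⁆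
    have hid : ⁅g, n⁆ = x ^ k * ⁅n', n⁆ * (x ^ k)⁻¹ * ⁅x ^ k, n⁆ := by
      rw [hg']
      have h1 : ⁅z * (x ^ k * n'), n⁆ =
          z * ⁅x ^ k * n', n⁆ * z⁻¹ * ⁅z, n⁆ := by
        simp only [commutatorElement_def]; group
      have h2 : ⁅z, n⁆ = 1 := by
        rw [commutatorElement_def, hz2 n, mul_inv_cancel]
      have h3 : ⁅x ^ k * n', n⁆ = x ^ k * ⁅n', n⁆ * (x ^ k)⁻¹ * ⁅x ^ k, n⁆ := by
        simp only [commutatorElement_def]; group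
      rw [h1, h2, mul_one, hz2 ⁅x ^ k * n', n⁆, h3]
    have hH1 : x ^ k * ⁅n', n⁆ * (x ^ k)⁻¹ ∈ H :=
      hHnormal.conj_mem _ (Subgroup.commutator_mem_commutator hn' hn) _
    obtain ⟨m, hm, hpm⟩ := key k n hn
    refine ⟨m⁻¹, N.inv_mem hm, ?_⟩
    have h4 : π ⁅g, n⁆ = π ⁅x, m⁆ := by
      rw [hid, map_mul, hker _ hH1, one_mul, hpm]
    have h5 : ⁅n, g⁆ = ⁅g, n⁆⁻¹ := by simp only [commutatorElement_def]; group
    rw [h5, map_inv, h4, hinv m hm]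
  -- the set of π⁅x,m⁆ is a subgroup of G ⧸ H
  let T : Subgroup (G ⧸ H) :=
    { carrier := {q | ∃ m ∈ N, q = π ⁅x, m⁆}
      one_mem' := ⟨1, N.one_mem, hone.symm⟩
      mul_mem' := by
        rintro a b ⟨m₁, h₁, rfl⟩ ⟨m₂, h₂, rfl⟩
        exact ⟨m₁ * m₂, N.mul_mem h₁ h₂, hmul m₁ h₁ m₂ h₂⟩
      inv_mem' := by
        rintro a ⟨m, hm, rfl⟩
        exact ⟨m⁻¹, N.inv_mem hm, hinv m hm⟩ }
  have hle : (⁅N, (⊤ : Subgroup G)⁆ : Subgroup G) ≤ T.comap π := by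
    rw [Subgroup.commutator_le]
    intro n hn g _
    exact hgen n hn g
  ext y
  constructor
  · intro hy
    obtain ⟨m, hm, hym⟩ := hle hy
    -- π y = π ⁅x, m⁆, so y * ⁅x,m⁆⁻¹ ∈ H
    have h6 : y⁻¹ * ⁅x, m⁆ ∈ H := by
      rwa [← QuotientGroup.eq, ← QuotientGroup.mk'_apply, ← QuotientGroup.mk'_apply]
    have h7 : y * ⁅x, m⁆⁻¹ ∈ H := by
      have := hHnormal.conj_mem _ (H.inv_mem h6) y
      simpa [mul_assoc] using this
    have : y = (y * ⁅x, m⁆⁻¹) * ⁅x, m⁆ := by group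
    rw [this]
    exact Set.mul_mem_mul h7 ⟨m, hm, rfl⟩
  · rintro ⟨a, ha, b, ⟨m, hm, rfl⟩, rfl⟩
    have h8 : a ∈ (⁅N, (⊤ : Subgroup G)⁆ : Subgroup G) :=
      Subgroup.commutator_mono le_rfl le_top ha
    have h9 : ⁅x, m⁆ ∈ (⁅N, (⊤ : Subgroup G)⁆ : Subgroup G) := by
      rw [Subgroup.commutator_comm]
      exact Subgroup.commutator_mem_commutator (Subgroup.mem_top x) hm
    exact Subgroup.mul_mem _ h8 h9
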